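/- Let A be a real symmetric positive definite matrix, b and c vectors, d, g, a, t real with a > 0. If the matrix M(t) = [[d − a t, bᵀ, g],[b, A, c],[g, cᵀ, t]] is positive semidefinite, then cᵀA⁻¹c ≤ t ≤ (d − bᵀA⁻¹b)/a. -/

import Mathlib

open Matrix

/-- The symmetric bordered matrix `[[dtop, bᵀ, g], [b, A, c], [g, cᵀ, tbot]]`. -/
def borderMat {n : ℕ} (A : Matrix (Fin n) (Fin n) ℝ) (b c : Fin n → ℝ)
    (dtop g tbot : ℝ) : Matrix (Unit ⊕ Fin n ⊕ Unit) (Unit ⊕ Fin n ⊕ Unit) ℝ :=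
  Matrix.of fun i j =>
    match i, j with
    | Sum.inl _, Sum.inl _ => dtop
    | Sum.inl _, Sum.inr (Sum.inl j) => b j
    | Sum.inl _, Sum.inr (Sum.inr _) => g
    | Sum.inr (Sum.inl i), Sum.inl _ => b i
    | Sum.inr (Sum.inl i), Sum.inr (Sum.inl j) => A i j
    | Sum.inr (Sum.inl i), Sum.inr (Sum.inr _) => c i
    | Sum.inr (Sum.inr _), Sum.inl _ => g
    | Sum.inr (Sum.inr _), Sum.inr (Sum.inl j) => c j
    | Sum.inr (Sum.inr _), Sum.inr (Sum.inr _) => tbot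

lemma quadform {n : ℕ} (A : Matrix (Fin n) (Fin n) ℝ) (b c : Fin n → ℝ)
    (dtop g tbot α β : ℝ) (v : Fin n → ℝ) :
    (Sum.elim (fun _ => α) (Sum.elim v fun _ => β)) ⬝ᵥ
      ((borderMat A b c dtop g tbot) *ᵥ (Sum.elim (fun _ => α) (Sum.elim v fun _ => β)))
    = α * (dtop * α + b ⬝ᵥ v + g * β) + (v ⬝ᵥ (α • b + A *ᵥ v + β • c))
      + β * (g * α + c ⬝ᵥ v + tbot * β) := by
  simp [borderMat, dotProduct, mulVec, Fintype.sum_sum_type, Finset.mul_sum,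
    Finset.sum_add_distrib, mul_add, add_mul, mul_comm, mul_left_comm]
  ring_nf

/-- If `M(t) = [[d − a t, bᵀ, g], [b, A, c], [g, cᵀ, t]]` is PSD with `A ≻ 0`
and `a > 0`, then `cᵀA⁻¹c ≤ t ≤ (d − bᵀA⁻¹b)/a`. -/
theorem stmt_13 {n : ℕ} (A : Matrix (Fin n) (Fin n) ℝ) (hA : A.PosDef)
    (b c : Fin n → ℝ) (d g a t : ℝ) (ha : 0 < a)
    (hM : (borderMat A b c (d - a * t) g t).PosSemidef) :
    c ⬝ᵥ (A⁻¹ *ᵥ c) ≤ t ∧ t ≤ (d - b ⬝ᵥ (A⁻¹ *ᵥ b)) / a := by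
  have hdet : IsUnit A.det := isUnit_iff_ne_zero.2 hA.det_pos.ne'
  have hAc : A *ᵥ (A⁻¹ *ᵥ c) = c := by
    rw [mulVec_mulVec, Matrix.mul_nonsing_inv _ hdet, one_mulVec]
  have hAb : A *ᵥ (A⁻¹ *ᵥ b) = b := by
    rw [mulVec_mulVec, Matrix.mul_nonsing_inv _ hdet, one_mulVec]
  constructor
  · have h := hM.dotProduct_mulVec_nonneg (Sum.elim (fun _ => (0:ℝ)) (Sum.elim (-(A⁻¹ *ᵥ c)) fun _ => 1))
    rw [show (star (Sum.elim (fun _ => (0:ℝ)) (Sum.elim (-(A⁻¹ *ᵥ c)) fun _ => 1)))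
        = Sum.elim (fun _ => (0:ℝ)) (Sum.elim (-(A⁻¹ *ᵥ c)) fun _ => 1) from rfl,
      quadform] at h
    simp [mulVec_neg, hAc, dotProduct_comm c] at h
    rw [dotProduct_comm] at h
    linarith
  · have h := hM.dotProduct_mulVec_nonneg (Sum.elim (fun _ => (1:ℝ)) (Sum.elim (-(A⁻¹ *ᵥ b)) fun _ => 0))
    rw [show (star (Sum.elim (fun _ => (1:ℝ)) (Sum.elim (-(A⁻¹ *ᵥ b)) fun _ => 0)))
        = Sum.elim (fun _ => (1:ℝ)) (Sum.elim (-(A⁻¹ *ᵥ b)) fun _ => 0) from rfl,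
      quadform] at h
    simp [mulVec_neg, hAb, dotProduct_comm b] at h
    rw [le_div_iff₀ ha]
    rw [dotProduct_comm] at h
    nlinarith
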